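/- Let r ∈ (0,1/2), let a,b,c,d ∈ ℝ, and suppose λ = a+b+c−4d+3 = 0. Then the integral D_r(a,b,c,d) = ∫_{A_r} x₁^a x₂^b x₃^c Δ(x₁,x₂,x₃)^{−d} dx₁ dx₂ dx₃ satisfies D_r(a,b,c,d) = ∫_{Ω_r} u^a v^b Q(u,v)^{−d} log(u/r) du dv, as an identity of Lebesgue integrals of nonnegative functions with values in [0,∞]. -/

import Mathlib

open MeasureTheory

/-- `Δ(x₁,x₂,x₃) = (x₁+x₂+x₃)(x₁+x₂−x₃)(x₁−x₂+x₃)(−x₁+x₂+x₃)`. -/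
noncomputable def Delta (x₁ x₂ x₃ : ℝ) : ℝ :=
  (x₁ + x₂ + x₃) * (x₁ + x₂ - x₃) * (x₁ - x₂ + x₃) * (-x₁ + x₂ + x₃)

/-- The region `A_r` of ordered triangle-admissible triples. -/
def regionA (r : ℝ) : Set (ℝ × ℝ × ℝ) :=
  {p | r ≤ p.1 ∧ p.1 < p.2.1 ∧ p.2.1 < p.2.2 ∧ p.2.2 ≤ 1 ∧
    p.2.1 - p.1 ≤ p.2.2 ∧ p.2.2 ≤ p.1 + p.2.1}

/-- `Q(u,v) = Δ(u,v,1)`. -/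
noncomputable def Qfun (u v : ℝ) : ℝ := Delta u v 1

/-- The shape domain `Ω_r`. -/
def regionOmega (r : ℝ) : Set (ℝ × ℝ) :=
  {p | r < p.1 ∧ p.1 < 1 / 2 ∧ 1 - p.1 < p.2 ∧ p.2 < 1} ∪
  {p | 1 / 2 < p.1 ∧ p.1 < 1 ∧ p.1 < p.2 ∧ p.2 < 1}

/-! ### Auxiliary material for the change of variables -/

noncomputable def e3 : (ℝ × ℝ × ℝ) ≃ₗ[ℝ] (Fin 3 → ℝ) where
  toFun p := ![p.1, p.2.1, p.2.2]
  invFun g := (g 0, g 1, g 2)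
  map_add' p q := by funext i; fin_cases i <;> simp
  map_smul' c p := by funext i; fin_cases i <;> simp
  left_inv p := by simp
  right_inv g := by funext i; fin_cases i <;> simp

noncomputable def B3 : Module.Basis (Fin 3) ℝ (ℝ × ℝ × ℝ) := Module.Basis.ofEquivFun e3

/-- The linear part of the substitution at `q = (t, u, v)`. -/
noncomputable def Lmap (q : ℝ × ℝ × ℝ) : (ℝ × ℝ × ℝ) →ₗ[ℝ] (ℝ × ℝ × ℝ) where
  toFun s := (q.2.1 * s.1 + q.1 * s.2.1, q.2.2 * s.1 + q.1 * s.2.2, s.1)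
  map_add' s s' := by dsimp; refine Prod.ext ?_ (Prod.ext ?_ ?_) <;> dsimp <;> ring
  map_smul' c s := by dsimp; refine Prod.ext ?_ (Prod.ext ?_ ?_) <;> dsimp <;> ring

noncomputable def Lclm (q : ℝ × ℝ × ℝ) : (ℝ × ℝ × ℝ) →L[ℝ] (ℝ × ℝ × ℝ) :=
  LinearMap.toContinuousLinearMap (Lmap q)

lemma Lclm_det (q : ℝ × ℝ × ℝ) : (Lclm q).det = q.1 ^ 2 := by
  have h : (Lclm q).det = LinearMap.det (Lmap q) := rfl
  rw [h, ← LinearMap.det_toMatrix B3, Matrix.det_fin_three]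
  simp [LinearMap.toMatrix_apply, B3, Lmap, e3, Module.Basis.ofEquivFun,
    Finsupp.linearEquivFunOnFinite_single, Finsupp.linearEquivFunOnFinite_symm_single, Finsupp.single_apply]
  ring

/-- The substitution map `(t,u,v) ↦ (tu, tv, t)`. -/
def smap (q : ℝ × ℝ × ℝ) : ℝ × ℝ × ℝ := (q.1 * q.2.1, q.1 * q.2.2, q.1)

lemma smap_hasFDerivAt (q : ℝ × ℝ × ℝ) : HasFDerivAt smap (Lclm q) q := by
  have h1 : HasFDerivAt (fun p : ℝ × ℝ × ℝ => p.1) (ContinuousLinearMap.fst ℝ ℝ (ℝ × ℝ)) q :=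
    hasFDerivAt_fst
  have h2 : HasFDerivAt (fun p : ℝ × ℝ × ℝ => p.2.1)
      ((ContinuousLinearMap.fst ℝ ℝ ℝ).comp (ContinuousLinearMap.snd ℝ ℝ (ℝ × ℝ))) q :=
    hasFDerivAt_fst.comp q hasFDerivAt_snd
  have h3 : HasFDerivAt (fun p : ℝ × ℝ × ℝ => p.2.2)
      ((ContinuousLinearMap.snd ℝ ℝ ℝ).comp (ContinuousLinearMap.snd ℝ ℝ (ℝ × ℝ))) q :=
    hasFDerivAt_snd.comp q hasFDerivAt_snd
  have H : HasFDerivAt smap _ q := ((h1.mul h2).prodMk ((h1.mul h3).prodMk h1))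
  refine H.congr_fderiv ?_
  refine ContinuousLinearMap.ext fun s => ?_
  simp [Lclm, Lmap, smap, Prod.ext_iff]
  constructor
  · ring
  · ring

lemma lint_inv {x : ℝ} (hx : 0 < x) :
    ∫⁻ t in Set.Icc x 1, ENNReal.ofReal t⁻¹ = ENNReal.ofReal (Real.log x⁻¹) := by
  rcases le_or_gt x 1 with hx1 | hx1
  · rw [← Measure.restrict_congr_set (Ioc_ae_eq_Icc (a := x) (b := 1))]
    have hInt : IntegrableOn (fun t : ℝ => t⁻¹) (Set.Ioc x 1) := by
      apply (ContinuousOn.integrableOn_Icc ?_).mono_set Set.Ioc_subset_Icc_self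
      exact ContinuousOn.inv₀ continuousOn_id fun t ht => ne_of_gt (lt_of_lt_of_le hx ht.1)
    rw [← ofReal_integral_eq_lintegral_ofReal hInt ?_]
    · congr 1
      rw [← intervalIntegral.integral_of_le hx1, integral_inv]
      · rw [one_div]
      · rw [Set.uIcc_of_le hx1]
        intro h
        exact absurd h.1 (not_le.mpr hx)
    · filter_upwards [ae_restrict_mem measurableSet_Ioc] with t ht
      exact inv_nonneg.mpr (le_of_lt (lt_of_lt_of_le hx ht.1.le))
  · have h1 : Set.Icc x 1 = (∅ : Set ℝ) := Set.Icc_eq_empty (by linarith)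
    rw [h1]
    rw [Measure.restrict_empty, lintegral_zero_measure, eq_comm, ENNReal.ofReal_eq_zero,
      Real.log_inv, neg_nonpos]
    exact Real.log_nonneg hx1.le

/-- The `(u,v)`-shadow region. -/
def regionW : Set (ℝ × ℝ) :=
  {w | w.1 < w.2 ∧ w.2 < 1 ∧ w.2 - w.1 ≤ 1 ∧ 1 ≤ w.1 + w.2}

/-- The region in `(t,u,v)`-coordinates. -/
def regionS (r : ℝ) : Set (ℝ × ℝ × ℝ) :=
  {q | 0 < q.1 ∧ q.1 ≤ 1 ∧ r ≤ q.1 * q.2.1 ∧ q.2 ∈ regionW}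

lemma regionW_pos {w : ℝ × ℝ} (hw : w ∈ regionW) : 0 < w.1 ∧ 0 < w.2 := by
  obtain ⟨h1, h2, h3, h4⟩ := hw
  constructor <;> linarith

lemma regionW_Q_nonneg {w : ℝ × ℝ} (hw : w ∈ regionW) : 0 ≤ Qfun w.1 w.2 := by
  obtain ⟨h1, h2, h3, h4⟩ := hw
  have := regionW_pos ⟨h1, h2, h3, h4⟩
  unfold Qfun Delta
  have f1 : (0:ℝ) ≤ w.1 + w.2 + 1 := by linarith
  have f2 : (0:ℝ) ≤ w.1 + w.2 - 1 := by linarith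
  have f3 : (0:ℝ) ≤ w.1 - w.2 + 1 := by linarith
  have f4 : (0:ℝ) ≤ -w.1 + w.2 + 1 := by linarith
  positivity

lemma smap_image {r : ℝ} (hr : 0 < r) : smap '' regionS r = regionA r := by
  ext p
  constructor
  · rintro ⟨q, ⟨ht0, ht1, hru, hw1, hw2, hw3, hw4⟩, rfl⟩
    have hu : 0 < q.2.1 := by nlinarith
    refine ⟨hru, ?_, ?_, ht1, ?_, ?_⟩ <;> simp only [smap] <;> nlinarith
  · intro hp
    obtain ⟨h1, h2, h3, h4, h5, h6⟩ := hp
    have h30 : 0 < p.2.2 := by linarith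
    refine ⟨(p.2.2, p.1 / p.2.2, p.2.1 / p.2.2), ⟨h30, h4, ?_, ?_, ?_, ?_, ?_⟩, ?_⟩
    · rw [mul_div_cancel₀ _ (ne_of_gt h30)]; exact h1
    · exact (div_lt_div_iff_of_pos_right h30).mpr h2
    · exact (div_lt_one h30).mpr h3
    · rw [div_sub_div_same, div_le_one h30]; linarith
    · rw [← add_div, le_div_iff₀ h30]; linarith
    · simp only [smap]
      refine Prod.ext ?_ (Prod.ext ?_ ?_) <;> dsimp <;> field_simp

lemma smap_injOn {r : ℝ} (hr : 0 < r) : Set.InjOn smap (regionS r) := by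
  rintro q hq q' hq' h
  have h3 : q.1 = q'.1 := congrArg (fun p => p.2.2) h
  have h1 : q.1 * q.2.1 = q'.1 * q'.2.1 := congrArg (fun p => p.1) h
  have h2 : q.1 * q.2.2 = q'.1 * q'.2.2 := congrArg (fun p => p.2.1) h
  have ht : 0 < q.1 := hq.1
  rw [h3] at h1 h2 ht
  refine Prod.ext h3 (Prod.ext ?_ ?_)
  · exact mul_left_cancel₀ (ne_of_gt ht) h1
  · exact mul_left_cancel₀ (ne_of_gt ht) h2

lemma key_alg {t u v : ℝ} (ht : 0 < t) (hu : 0 < u) (hv : 0 < v) (hQ : 0 ≤ Qfun u v)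
    {a b c d : ℝ} (hl : a + b + c - 4 * d + 3 = 0) :
    t ^ (2:ℕ) * ((t*u) ^ a * (t*v) ^ b * t ^ c * (Delta (t*u) (t*v) t) ^ (-d))
      = t⁻¹ * (u ^ a * v ^ b * (Qfun u v) ^ (-d)) := by
  have hD : Delta (t*u) (t*v) t = t ^ (4:ℕ) * Qfun u v := by
    simp only [Delta, Qfun]; ring
  rw [hD, Real.mul_rpow (by positivity) hQ, Real.mul_rpow ht.le hu.le,
    Real.mul_rpow ht.le hv.le, ← Real.rpow_natCast t 2, ← Real.rpow_natCast t 4,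
    ← Real.rpow_mul ht.le]
  have key : t ^ ((2:ℕ):ℝ) * t ^ a * t ^ b * t ^ c * t ^ (((4:ℕ):ℝ) * (-d)) = t ^ (-1:ℝ) := by
    rw [← Real.rpow_add ht, ← Real.rpow_add ht, ← Real.rpow_add ht, ← Real.rpow_add ht]
    congr 1
    push_cast
    linarith
  calc t ^ ((2:ℕ):ℝ) * (t ^ a * u ^ a * (t ^ b * v ^ b) * t ^ c *
          (t ^ (((4:ℕ):ℝ) * (-d)) * (Qfun u v) ^ (-d)))
      = (t ^ ((2:ℕ):ℝ) * t ^ a * t ^ b * t ^ c * t ^ (((4:ℕ):ℝ) * (-d))) *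
          (u ^ a * v ^ b * (Qfun u v) ^ (-d)) := by ring
    _ = t⁻¹ * (u ^ a * v ^ b * (Qfun u v) ^ (-d)) := by rw [key, Real.rpow_neg_one]

theorem stmt_1 (r a b c d : ℝ) (hr : r ∈ Set.Ioo (0 : ℝ) (1 / 2))
    (hl : a + b + c - 4 * d + 3 = 0) :
    ∫⁻ p in regionA r,
        ENNReal.ofReal (p.1 ^ a * p.2.1 ^ b * p.2.2 ^ c * Delta p.1 p.2.1 p.2.2 ^ (-d)) =
    ∫⁻ p in regionOmega r,
        ENNReal.ofReal (p.1 ^ a * p.2 ^ b * Qfun p.1 p.2 ^ (-d) *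
            Real.log (p.1 / r)) := by
  obtain ⟨hr0, hr2⟩ := hr
  -- abbreviations
  set C : ℝ × ℝ → ℝ := fun w => w.1 ^ a * w.2 ^ b * (Qfun w.1 w.2) ^ (-d) with hCdef
  have hW : MeasurableSet regionW := by
    unfold regionW
    simp only [Set.setOf_and]
    refine MeasurableSet.inter ?_ (MeasurableSet.inter ?_ (MeasurableSet.inter ?_ ?_)) <;>
    first
    | exact measurableSet_lt (by fun_prop) (by fun_prop)
    | exact measurableSet_le (by fun_prop) (by fun_prop)
  have hS : MeasurableSet (regionS r) := by
    have : regionS r = {q : ℝ × ℝ × ℝ | 0 < q.1} ∩ {q | q.1 ≤ 1} ∩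
        {q | r ≤ q.1 * q.2.1} ∩ (Prod.snd ⁻¹' regionW) := by
      ext q; simp [regionS, Set.mem_setOf_eq]; tauto
    rw [this]
    refine MeasurableSet.inter (MeasurableSet.inter (MeasurableSet.inter ?_ ?_) ?_)
      (hW.preimage measurable_snd) <;>
    first
    | exact measurableSet_lt (by fun_prop) (by fun_prop)
    | exact measurableSet_le (by fun_prop) (by fun_prop)
  have hO : MeasurableSet (regionOmega r) := by
    unfold regionOmega
    apply MeasurableSet.union <;>
    · simp only [Set.setOf_and]
      refine MeasurableSet.inter ?_ (MeasurableSet.inter ?_ (MeasurableSet.inter ?_ ?_)) <;>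
      first
      | exact measurableSet_lt (by fun_prop) (by fun_prop)
      | exact measurableSet_le (by fun_prop) (by fun_prop)
  have hCmeas : Measurable C := by
    rw [hCdef]
    unfold Qfun Delta
    fun_prop
  haveI hHaar : (volume : Measure (ℝ × ℝ × ℝ)).IsAddHaarMeasure :=
    (Measure.prod.instIsAddHaarMeasure _ _ : ((volume : Measure ℝ).prod
      ((volume : Measure ℝ).prod (volume : Measure ℝ))).IsAddHaarMeasure)
  have hG : Measurable (fun q : ℝ × ℝ × ℝ => ENNReal.ofReal (q.1⁻¹ * C q.2)) :=
    (measurable_fst.inv.mul (hCmeas.comp measurable_snd)).ennreal_ofReal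
  -- Step 1: change of variables
  have step1 :
      ∫⁻ p in regionA r,
          ENNReal.ofReal (p.1 ^ a * p.2.1 ^ b * p.2.2 ^ c * Delta p.1 p.2.1 p.2.2 ^ (-d)) =
      ∫⁻ q in regionS r, ENNReal.ofReal (q.1⁻¹ * C q.2) := by
    rw [← smap_image hr0,
      lintegral_image_eq_lintegral_abs_det_fderiv_mul volume hS
        (fun q _ => (smap_hasFDerivAt q).hasFDerivWithinAt) (smap_injOn hr0)]
    apply setLIntegral_congr_fun hS
    rintro q ⟨ht0, ht1, hru, hw⟩
    have hu : 0 < q.2.1 := (regionW_pos hw).1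
    have hv : 0 < q.2.2 := (regionW_pos hw).2
    beta_reduce
    rw [Lclm_det, abs_of_nonneg (by positivity), smap,
      ← ENNReal.ofReal_mul (by positivity)]
    congr 1
    exact key_alg ht0 hu hv (regionW_Q_nonneg hw) hl
  rw [step1]
  -- Step 2: Tonelli and the t-integral
  have step2 :
      ∫⁻ q in regionS r, ENNReal.ofReal (q.1⁻¹ * C q.2) =
      ∫⁻ w, regionW.indicator (fun w => ENNReal.ofReal (C w * Real.log (w.1 / r))) w := by
    rw [← lintegral_indicator hS, Measure.volume_eq_prod,
      lintegral_prod_symm _ ((hG.indicator hS).aemeasurable)]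
    · apply lintegral_congr
      intro w
      by_cases hw : w ∈ regionW
      · have hu : 0 < w.1 := (regionW_pos hw).1
        have hv : 0 < w.2 := (regionW_pos hw).2
        have hslice : ∀ t : ℝ,
            (regionS r).indicator (fun q => ENNReal.ofReal (q.1⁻¹ * C q.2)) (t, w) =
            (Set.Icc (r / w.1) 1).indicator (fun t => ENNReal.ofReal (t⁻¹ * C w)) t := by
          intro t
          unfold Set.indicator
          have hiff : (t, w) ∈ regionS r ↔ t ∈ Set.Icc (r / w.1) 1 := by
            constructor
            · rintro ⟨ht0, ht1, hru, -⟩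
              exact ⟨(div_le_iff₀ hu).mpr hru, ht1⟩
            · rintro ⟨h1, h2⟩
              have ht0 : 0 < t := lt_of_lt_of_le (by positivity) h1
              exact ⟨ht0, h2, (div_le_iff₀ hu).mp h1, hw⟩
          simp only [hiff]
        calc ∫⁻ t, (regionS r).indicator (fun q => ENNReal.ofReal (q.1⁻¹ * C q.2)) (t, w)
            = ∫⁻ t, (Set.Icc (r / w.1) 1).indicator
                (fun t => ENNReal.ofReal (t⁻¹ * C w)) t := by
              exact lintegral_congr hslice
          _ = ∫⁻ t in Set.Icc (r / w.1) 1, ENNReal.ofReal (t⁻¹ * C w) :=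
              lintegral_indicator measurableSet_Icc _
          _ = ∫⁻ t in Set.Icc (r / w.1) 1, ENNReal.ofReal t⁻¹ * ENNReal.ofReal (C w) := by
              apply setLIntegral_congr_fun measurableSet_Icc
              rintro t ⟨h1, h2⟩
              have ht0 : 0 < t := lt_of_lt_of_le (by positivity) h1
              beta_reduce
              rw [ENNReal.ofReal_mul (by positivity)]
          _ = (∫⁻ t in Set.Icc (r / w.1) 1, ENNReal.ofReal t⁻¹) * ENNReal.ofReal (C w) :=
              lintegral_mul_const _ (measurable_inv.ennreal_ofReal)
          _ = ENNReal.ofReal (Real.log (r / w.1)⁻¹) * ENNReal.ofReal (C w) := by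
              rw [lint_inv (by positivity)]
          _ = ENNReal.ofReal (C w * Real.log (w.1 / r)) := by
              have hC : 0 ≤ C w := by
                have hQ := regionW_Q_nonneg hw
                simp only [hCdef]
                exact mul_nonneg (mul_nonneg (Real.rpow_nonneg hu.le a)
                  (Real.rpow_nonneg hv.le b)) (Real.rpow_nonneg hQ (-d))
              rw [inv_div, mul_comm, ← ENNReal.ofReal_mul hC]
          _ = regionW.indicator (fun w => ENNReal.ofReal (C w * Real.log (w.1 / r))) w := by
              rw [Set.indicator_of_mem hw]
      · rw [Set.indicator_of_notMem hw]
        have : ∀ t : ℝ, (regionS r).indicator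
            (fun q => ENNReal.ofReal (q.1⁻¹ * C q.2)) (t, w) = 0 := by
          intro t
          apply Set.indicator_of_notMem
          rintro ⟨-, -, -, hmem⟩
          exact hw hmem
        simp only [this, lintegral_zero]
  rw [step2]
  -- Step 3: a.e. identification of the two planar regions
  have hN : volume ({w : ℝ × ℝ | w.1 = r} ∪ {w : ℝ × ℝ | w.1 = 1/2} ∪
      {w : ℝ × ℝ | w.1 + w.2 = 1}) = 0 := by
    refine measure_union_null (measure_union_null ?_ ?_) ?_
    · have : {w : ℝ × ℝ | w.1 = r} = ({r} : Set ℝ) ×ˢ (Set.univ : Set ℝ) := by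
        ext w; simp [Prod.ext_iff, eq_comm]
      rw [this, Measure.volume_eq_prod, Measure.prod_prod, Real.volume_singleton, zero_mul]
    · have : {w : ℝ × ℝ | w.1 = 1/2} = ({1/2} : Set ℝ) ×ˢ (Set.univ : Set ℝ) := by
        ext w; simp [Prod.ext_iff, eq_comm]
      rw [this, Measure.volume_eq_prod, Measure.prod_prod, Real.volume_singleton, zero_mul]
    · rw [Measure.volume_eq_prod]
      rw [Measure.measure_prod_null (measurableSet_eq_fun (by fun_prop) measurable_const)]
      apply ae_of_all
      intro x
      have : Prod.mk x ⁻¹' {w : ℝ × ℝ | w.1 + w.2 = 1} = {y : ℝ | y = 1 - x} := by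
        ext y; simp; constructor <;> intro h <;> linarith
      simp [this]
  have step3 :
      ∫⁻ w, regionW.indicator (fun w => ENNReal.ofReal (C w * Real.log (w.1 / r))) w =
      ∫⁻ w, (regionOmega r).indicator
          (fun w => ENNReal.ofReal (C w * Real.log (w.1 / r))) w := by
    apply lintegral_congr_ae
    filter_upwards [measure_eq_zero_iff_ae_notMem.mp hN] with w hwN
    simp only [Set.mem_union, not_or, Set.mem_setOf_eq] at hwN
    obtain ⟨⟨hw1, hw2⟩, hw3⟩ := hwN
    by_cases hw : w ∈ regionOmega r
    · have hwW : w ∈ regionW := by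
        rcases hw with ⟨h1, h2, h3, h4⟩ | ⟨h1, h2, h3, h4⟩ <;>
          exact ⟨by linarith, by linarith, by linarith, by linarith⟩
      rw [Set.indicator_of_mem hw, Set.indicator_of_mem hwW]
    · rw [Set.indicator_of_notMem hw]
      by_cases hwW : w ∈ regionW
      · -- then necessarily w.1 < r, so the integrand vanishes
        obtain ⟨h1, h2, h3, h4⟩ := hwW
        have hu : 0 < w.1 := (regionW_pos ⟨h1, h2, h3, h4⟩).1
        have h4' : 1 < w.1 + w.2 := lt_of_le_of_ne h4 (fun h => hw3 h.symm)
        have hwr : w.1 < r := by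
          by_contra hcon
          push_neg at hcon
          have hur : r < w.1 := lt_of_le_of_ne hcon (fun h => hw1 h.symm)
          rcases lt_or_gt_of_ne hw2 with hlt | hgt
          · exact hw (Set.mem_union_left _ ⟨hur, hlt, by linarith, h2⟩)
          · exact hw (Set.mem_union_right _ ⟨hgt, by linarith, h1, h2⟩)
        rw [Set.indicator_of_mem (show w ∈ regionW from ⟨h1, h2, h3, h4⟩)]
        apply ENNReal.ofReal_eq_zero.mpr
        apply mul_nonpos_of_nonneg_of_nonpos
        · have hQ := regionW_Q_nonneg ⟨h1, h2, h3, h4⟩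
          have hv : 0 < w.2 := (regionW_pos ⟨h1, h2, h3, h4⟩).2
          simp only [hCdef]
          exact mul_nonneg (mul_nonneg (Real.rpow_nonneg hu.le a)
            (Real.rpow_nonneg hv.le b)) (Real.rpow_nonneg hQ (-d))
        · apply Real.log_nonpos
          · positivity
          · rw [div_le_one hr0]; linarith
      · rw [Set.indicator_of_notMem hwW]
  rw [step3, lintegral_indicator hO]
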